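/- Let d1 > 0, d2 > 0, y⋆ > 0 with d1·d2 < 1/(4·y⋆²), KP ≥ 0, KI > 0, u0 ∈ ℝ, r := (1/2)·√(1 - 4·d1·d2·y⋆²), and let χ̄^u be the minimal-current equilibrium of the PI closed-loop vector field f. Then the constant coefficient a0 of the characteristic polynomial λ³ + a2·λ² + a1·λ + a0 of the Jacobian ∇f(χ̄^u) equals -2·KI·r < 0; equivalently det ∇f(χ̄^u) = 2·KI·r. -/

import Mathlib

noncomputable def e3 : (ℝ × ℝ × ℝ) ≃ₗ[ℝ] (Fin 3 → ℝ) where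
  toFun p := ![p.1, p.2.1, p.2.2]
  invFun v := (v 0, v 1, v 2)
  map_add' p q := by funext i; fin_cases i <;> simp
  map_smul' c p := by funext i; fin_cases i <;> simp
  left_inv p := by simp
  right_inv v := by funext i; fin_cases i <;> simp

noncomputable def b3 : Module.Basis (Fin 3) ℝ (ℝ × ℝ × ℝ) := Module.Basis.ofEquivFun e3

/-- at the minimal-current equilibrium the constant coefficient of the
characteristic polynomial of the Jacobian equals -2·KI·r < 0; equivalently the
determinant of the Jacobian equals 2·KI·r. -/
theorem boost_pi_min_current_charpoly_coeff
    (d1 d2 ystar KP KI u0 : ℝ) (hd1 : 0 < d1) (hd2 : 0 < d2) (hy : 0 < ystar)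
    (hcond : d1 * d2 < 1 / (4 * ystar ^ 2)) (hKP : 0 ≤ KP) (hKI : 0 < KI)
    (r : ℝ) (hr : r = (1 / 2) * Real.sqrt (1 - 4 * d1 * d2 * ystar ^ 2))
    (f : ℝ × ℝ × ℝ → ℝ × ℝ × ℝ)
    (hf : ∀ χ : ℝ × ℝ × ℝ,
      f χ = (-d1 * χ.1 + 1 - (u0 + KI * χ.2.2 + KP * (ystar - χ.2.1)) * χ.2.1,
             -d2 * χ.2.1 + (u0 + KI * χ.2.2 + KP * (ystar - χ.2.1)) * χ.1,
             ystar - χ.2.1))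
    (χu : ℝ × ℝ × ℝ)
    (hχu : χu = ((1 / (2 * d1)) * (1 - 2 * r), ystar,
      (1 - d1 * ((1 / (2 * d1)) * (1 - 2 * r)) - u0 * ystar) / (KI * ystar))) :
    (LinearMap.charpoly (((fderiv ℝ f χu : ℝ × ℝ × ℝ →L[ℝ] ℝ × ℝ × ℝ) :
        ℝ × ℝ × ℝ →ₗ[ℝ] ℝ × ℝ × ℝ))).coeff 0 = -(2 * KI * r) ∧
    -(2 * KI * r) < 0 ∧
    LinearMap.det ((fderiv ℝ f χu : ℝ × ℝ × ℝ →L[ℝ] ℝ × ℝ × ℝ) :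
        ℝ × ℝ × ℝ →ₗ[ℝ] ℝ × ℝ × ℝ) = 2 * KI * r := by
  -- positivity of r
  have hb : (0:ℝ) < 4 * ystar ^ 2 := by positivity
  have h4 : 4 * d1 * d2 * ystar ^ 2 < 1 := by
    have := (lt_div_iff₀ hb).mp hcond
    nlinarith
  have hrpos : 0 < r := by
    rw [hr]
    have : 0 < Real.sqrt (1 - 4 * d1 * d2 * ystar ^ 2) :=
      Real.sqrt_pos.mpr (by linarith)
    linarith
  -- compute the determinant
  have hdet : LinearMap.det ((fderiv ℝ f χu : ℝ × ℝ × ℝ →L[ℝ] ℝ × ℝ × ℝ) :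
      ℝ × ℝ × ℝ →ₗ[ℝ] ℝ × ℝ × ℝ) = 2 * KI * r := by
    have hfe : f = fun χ : ℝ × ℝ × ℝ =>
        ((-d1 * χ.1 + 1 - (u0 + KI * χ.2.2 + KP * (ystar - χ.2.1)) * χ.2.1,
          -d2 * χ.2.1 + (u0 + KI * χ.2.2 + KP * (ystar - χ.2.1)) * χ.1,
          ystar - χ.2.1) : ℝ × ℝ × ℝ) := funext hf
    set p1 : (ℝ × ℝ × ℝ) →L[ℝ] ℝ := ContinuousLinearMap.fst ℝ ℝ (ℝ × ℝ) with hp1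
    set p2 : (ℝ × ℝ × ℝ) →L[ℝ] ℝ :=
      (ContinuousLinearMap.fst ℝ ℝ ℝ).comp (ContinuousLinearMap.snd ℝ ℝ (ℝ × ℝ)) with hp2
    set p3 : (ℝ × ℝ × ℝ) →L[ℝ] ℝ :=
      (ContinuousLinearMap.snd ℝ ℝ ℝ).comp (ContinuousLinearMap.snd ℝ ℝ (ℝ × ℝ)) with hp3
    have hx1 : HasFDerivAt (fun χ : ℝ × ℝ × ℝ => χ.1) p1 χu := hasFDerivAt_fst
    have hx2 : HasFDerivAt (fun χ : ℝ × ℝ × ℝ => χ.2.1) p2 χu :=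
      hasFDerivAt_fst.comp χu hasFDerivAt_snd
    have hx3 : HasFDerivAt (fun χ : ℝ × ℝ × ℝ => χ.2.2) p3 χu :=
      hasFDerivAt_snd.comp χu hasFDerivAt_snd
    have hu := ((hasFDerivAt_const u0 χu).add (hx3.const_mul KI)).add
        (((hasFDerivAt_const ystar χu).sub hx2).const_mul KP)
    have h1 := ((hx1.const_mul (-d1)).add_const (1:ℝ)).sub (hu.mul hx2)
    have h2 := (hx2.const_mul (-d2)).add (hu.mul hx1)
    have h3 := (hasFDerivAt_const ystar χu).sub hx2
    have h := HasFDerivAt.prodMk h1 (HasFDerivAt.prodMk h2 h3)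
    rw [hfe]
    rw [(show HasFDerivAt (fun χ : ℝ × ℝ × ℝ =>
        ((-d1 * χ.1 + 1 - (u0 + KI * χ.2.2 + KP * (ystar - χ.2.1)) * χ.2.1,
          -d2 * χ.2.1 + (u0 + KI * χ.2.2 + KP * (ystar - χ.2.1)) * χ.1,
          ystar - χ.2.1) : ℝ × ℝ × ℝ)) _ χu from h).fderiv]
    rw [← LinearMap.det_toMatrix b3, Matrix.det_fin_three]
    simp [LinearMap.toMatrix_apply, b3, e3, Module.Basis.coe_ofEquivFun, Function.update,
      Matrix.cons_val_zero, Matrix.cons_val_one]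
    subst hχu
    simp only [hp1, hp2, hp3, ContinuousLinearMap.coe_comp', ContinuousLinearMap.coe_fst',
      ContinuousLinearMap.coe_snd', Function.comp_apply]
    have hKI' : (KI:ℝ) ≠ 0 := ne_of_gt hKI
    have hy' : (ystar:ℝ) ≠ 0 := ne_of_gt hy
    have hd1' : (d1:ℝ) ≠ 0 := ne_of_gt hd1
    field_simp
    ring
  refine ⟨?_, by nlinarith, hdet⟩
  have hsign := LinearMap.det_eq_sign_charpoly_coeff
    ((fderiv ℝ f χu : ℝ × ℝ × ℝ →L[ℝ] ℝ × ℝ × ℝ) : ℝ × ℝ × ℝ →ₗ[ℝ] ℝ × ℝ × ℝ)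
  have hrank : Module.finrank ℝ (ℝ × ℝ × ℝ) = 3 := by
    simp [Module.finrank_prod]
  rw [hdet, hrank] at hsign
  linarith [hsign]
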